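/- Let f : ℝ² → ℝ be real-analytic and suppose that for every integer k, f(2kπ − x, y) = −f(x,y) for all (x,y) ∈ ℝ² (f is odd about every vertical line x = kπ). Then there exists a real-analytic function g : ℝ² → ℝ such that f(x,y) = g(x,y)·sin x for all (x,y) ∈ ℝ²; moreover g can be chosen so that g(2kπ − x, y) = g(x,y) for every integer k (g is even about every line x = kπ). -/

import Mathlib

open Real Filter Function Finset
open scoped NNReal ENNReal Topology

noncomputable section

namespace OddFactorAux

/-- first basis vector of `ℝ × ℝ` -/
def e1 : ℝ × ℝ := (1, 0)

/-- projection onto the second coordinate, as a map `ℝ² → ℝ²` -/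
def PP : (ℝ × ℝ) →L[ℝ] (ℝ × ℝ) :=
  ContinuousLinearMap.prod 0 (ContinuousLinearMap.snd ℝ ℝ ℝ)

lemma PP_apply (z : ℝ × ℝ) : PP z = (0, z.2) := rfl

lemma norm_PP_le (z : ℝ × ℝ) : ‖PP z‖ ≤ ‖z‖ := by
  rw [PP_apply, Prod.norm_def, Prod.norm_def]
  simp only [norm_zero]
  exact max_le ((norm_nonneg z.1).trans (le_max_left _ _)) (le_max_right _ _)

lemma norm_e1 : ‖e1‖ = 1 := by
  rw [e1, Prod.norm_def]; simp

/-- the linear map applied in slot `j` of our construction -/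
def cc (k : ℕ) (j : ℕ) : (ℝ × ℝ) →L[ℝ] (ℝ × ℝ) :=
  if j < k then PP else ContinuousLinearMap.id ℝ (ℝ × ℝ)

lemma norm_cc_le (k j : ℕ) (z : ℝ × ℝ) : ‖cc k j z‖ ≤ ‖z‖ := by
  rw [cc]; split
  · exact norm_PP_le z
  · simp

lemma insertNth_update {n : ℕ} {α : Type*} [DecidableEq (Fin n)] (k : Fin (n + 1)) (x : α)
    (v : Fin n → α) (i : Fin n) (y : α) :
    k.insertNth x (Function.update v i y) =
      Function.update (k.insertNth x v : Fin (n + 1) → α) (k.succAbove i) y := by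
  funext l
  refine Fin.succAboveCases k ?_ (fun j => ?_) l
  · rw [Function.update_of_ne (Fin.succAbove_ne k i).symm]
    simp
  · rw [Fin.insertNth_apply_succAbove]
    rcases eq_or_ne j i with rfl | h
    · simp
    · rw [Function.update_of_ne h, Function.update_of_ne
        (fun hc => h (Fin.succAbove_right_injective hc)), Fin.insertNth_apply_succAbove]

/-- The continuous multilinear map
`v ↦ q (P v₁, …, P v_k, e₁, v_{k+1}, …, v_m)`. -/
def TT (m : ℕ) (q : ContinuousMultilinearMap ℝ (fun _ : Fin (m + 1) => ℝ × ℝ) ℝ)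
    (k : Fin (m + 1)) : ContinuousMultilinearMap ℝ (fun _ : Fin m => ℝ × ℝ) ℝ :=
  MultilinearMap.mkContinuous
    { toFun := fun v => q (k.insertNth e1 fun j => cc (k : ℕ) (j : ℕ) (v j))
      map_update_add' := by
        intro _ v i x y
        have hupd : ∀ x : ℝ × ℝ,
            (fun j : Fin m => cc (k : ℕ) (j : ℕ) (Function.update v i x j)) =
              Function.update (fun j : Fin m => cc (k : ℕ) (j : ℕ) (v j)) i
                (cc (k : ℕ) (i : ℕ) x) := by
          intro x; funext j
          rcases eq_or_ne j i with rfl | h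
          · simp
          · rw [Function.update_of_ne h, Function.update_of_ne h]
        simp only [hupd, (cc (k : ℕ) (i : ℕ)).map_add, insertNth_update]
        exact q.map_update_add _ _ _ _
      map_update_smul' := by
        intro _ v i c x
        have hupd : ∀ x : ℝ × ℝ,
            (fun j : Fin m => cc (k : ℕ) (j : ℕ) (Function.update v i x j)) =
              Function.update (fun j : Fin m => cc (k : ℕ) (j : ℕ) (v j)) i
                (cc (k : ℕ) (i : ℕ) x) := by
          intro x; funext j
          rcases eq_or_ne j i with rfl | h
          · simp
          · rw [Function.update_of_ne h, Function.update_of_ne h]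
        simp only [hupd, (cc (k : ℕ) (i : ℕ)).map_smul, insertNth_update]
        exact q.map_update_smul _ _ _ _ }
    ‖q‖
    (by
      intro v
      refine (q.le_opNorm _).trans ?_
      have hprod : ∏ i : Fin (m + 1),
            ‖(k.insertNth e1 (fun j => cc (k : ℕ) (j : ℕ) (v j)) : Fin (m + 1) → ℝ × ℝ) i‖ =
          ‖e1‖ * ∏ j : Fin m, ‖cc (k : ℕ) (j : ℕ) (v j)‖ := by
        rw [Fin.prod_univ_succAbove
          (fun i => ‖(k.insertNth e1 (fun j => cc (k : ℕ) (j : ℕ) (v j)) : Fin (m + 1) → ℝ × ℝ) i‖) k]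
        simp
      rw [hprod, norm_e1, one_mul]
      have : ∏ j : Fin m, ‖cc (k : ℕ) (j : ℕ) (v j)‖ ≤ ∏ j : Fin m, ‖v j‖ :=
        Finset.prod_le_prod (fun j _ => norm_nonneg _) (fun j _ => norm_cc_le _ _ _)
      exact mul_le_mul_of_nonneg_left this (norm_nonneg q))

lemma TT_apply (m : ℕ) (q : ContinuousMultilinearMap ℝ (fun _ : Fin (m + 1) => ℝ × ℝ) ℝ)
    (k : Fin (m + 1)) (v : Fin m → ℝ × ℝ) :
    TT m q k v = q (k.insertNth e1 fun j => cc (k : ℕ) (j : ℕ) (v j)) := rfl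

lemma norm_TT_le (m : ℕ) (q : ContinuousMultilinearMap ℝ (fun _ : Fin (m + 1) => ℝ × ℝ) ℝ)
    (k : Fin (m + 1)) : ‖TT m q k‖ ≤ ‖q‖ :=
  MultilinearMap.mkContinuous_norm_le _ (norm_nonneg q) _

/-- the divided power series -/
def rS (p : FormalMultilinearSeries ℝ (ℝ × ℝ) ℝ) : FormalMultilinearSeries ℝ (ℝ × ℝ) ℝ :=
  fun m => ∑ k : Fin (m + 1), TT m (p (m + 1)) k

lemma norm_rS_le (p : FormalMultilinearSeries ℝ (ℝ × ℝ) ℝ) (m : ℕ) :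
    ‖rS p m‖ ≤ (m + 1) * ‖p (m + 1)‖ := by
  refine (norm_sum_le _ _).trans ?_
  calc ∑ k : Fin (m + 1), ‖TT m (p (m + 1)) k‖
      ≤ ∑ _k : Fin (m + 1), ‖p (m + 1)‖ := Finset.sum_le_sum fun k _ => norm_TT_le m _ k
    _ = (m + 1) * ‖p (m + 1)‖ := by simp [mul_comm]

/-- The key telescoping identity. -/
lemma key (p : FormalMultilinearSeries ℝ (ℝ × ℝ) ℝ) (m : ℕ) (z : ℝ × ℝ) :
    z.1 * (rS p m) (fun _ => z) =
      p (m + 1) (fun _ => z) - p (m + 1) (fun _ => ((0 : ℝ), z.2)) := by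
  set w : ℝ × ℝ := ((0 : ℝ), z.2) with hw
  set A : ℕ → Fin (m + 1) → ℝ × ℝ := fun j i => if (i : ℕ) < j then w else z with hA
  have hterm : ∀ k : Fin (m + 1),
      z.1 * TT m (p (m + 1)) k (fun _ => z) =
        p (m + 1) (A (k : ℕ)) - p (m + 1) (A ((k : ℕ) + 1)) := by
    intro k
    have h1 : (fun j : Fin m => cc (k : ℕ) (j : ℕ) z) =
        fun j : Fin m => if (j : ℕ) < (k : ℕ) then w else z := by
      funext j
      by_cases h : (j : ℕ) < (k : ℕ) <;> simp [cc, h, PP_apply, hw]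
    have hB : k.insertNth e1 (fun j : Fin m => if (j : ℕ) < (k : ℕ) then w else z) =
        Function.update (A (k : ℕ)) k e1 := by
      funext l
      refine Fin.succAboveCases k ?_ (fun j => ?_) l
      · simp
      · rw [Fin.insertNth_apply_succAbove,
          Function.update_of_ne (Fin.succAbove_ne k j)]
        have hiff : ((k.succAbove j : ℕ) < (k : ℕ)) ↔ ((j : ℕ) < (k : ℕ)) := by
          rcases lt_or_ge (j.castSucc) k with h | h
          · rw [Fin.succAbove_of_castSucc_lt _ _ h]
            simp
          · rw [Fin.succAbove_of_le_castSucc _ _ h]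
            have : (k : ℕ) ≤ (j : ℕ) := by simpa [Fin.le_def] using h
            simp only [Fin.val_succ]
            omega
        simp only [hA]
        rcases Classical.em ((j : ℕ) < (k : ℕ)) with h | h
        · rw [if_pos (hiff.mpr h), if_pos h]
        · rw [if_neg (fun hc => h (hiff.mp hc)), if_neg h]
    have hz_smul : z.1 • e1 = z - w := by
      rw [hw, e1]
      ext <;> simp
    have hAkz : Function.update (A (k : ℕ)) k z = A (k : ℕ) := by
      funext i
      rcases eq_or_ne i k with rfl | h
      · simp [hA]
      · rw [Function.update_of_ne h]
    have hAkw : Function.update (A (k : ℕ)) k w = A ((k : ℕ) + 1) := by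
      funext i
      rcases eq_or_ne i k with rfl | h
      · simp [hA]
      · rw [Function.update_of_ne h]
        have hik : (i : ℕ) ≠ (k : ℕ) := fun hc => h (Fin.ext hc)
        simp only [hA]
        rcases Classical.em ((i : ℕ) < (k : ℕ)) with h' | h'
        · rw [if_pos h', if_pos (by omega)]
        · rw [if_neg h', if_neg (by omega)]
    calc z.1 * TT m (p (m + 1)) k (fun _ => z)
        = z.1 • p (m + 1) (Function.update (A (k : ℕ)) k e1) := by
          rw [TT_apply, h1, hB, smul_eq_mul]
      _ = p (m + 1) (Function.update (A (k : ℕ)) k (z.1 • e1)) := by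
          rw [(p (m + 1)).map_update_smul]
      _ = p (m + 1) (Function.update (A (k : ℕ)) k z) -
            p (m + 1) (Function.update (A (k : ℕ)) k w) := by
          rw [hz_smul, (p (m + 1)).map_update_sub]
      _ = p (m + 1) (A (k : ℕ)) - p (m + 1) (A ((k : ℕ) + 1)) := by rw [hAkz, hAkw]
  have hsum : z.1 * (rS p m) (fun _ => z) =
      ∑ k : Fin (m + 1), (p (m + 1) (A (k : ℕ)) - p (m + 1) (A ((k : ℕ) + 1))) := by
    rw [rS, ContinuousMultilinearMap.sum_apply, Finset.mul_sum]
    exact Finset.sum_congr rfl fun k _ => hterm k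
  rw [hsum, Fin.sum_univ_eq_sum_range (fun j => p (m + 1) (A j) - p (m + 1) (A (j + 1))),
    Finset.sum_range_sub' (fun j => p (m + 1) (A j))]
  have hA0 : A 0 = fun _ => z := by funext i; simp [hA]
  have hAm : A (m + 1) = fun _ => w := by
    funext i; simp [hA, i.isLt]
  rw [hA0, hAm]

/-- Division of an analytic function of two variables by `x - c₁`. -/
lemma divide (f : ℝ × ℝ → ℝ) (c : ℝ × ℝ) (hfc : AnalyticAt ℝ f c) :
    ∃ (G : ℝ × ℝ → ℝ) (ε : ℝ), 0 < ε ∧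
      (∀ z ∈ Metric.ball c ε, AnalyticAt ℝ G z) ∧
      (∀ z ∈ Metric.ball c ε, (z.1 - c.1) * G z = f z - f (c.1, z.2)) := by
  obtain ⟨p, hpa⟩ := hfc
  obtain ⟨ρ, hp⟩ := hpa
  have hρ : (0 : ℝ≥0∞) < ρ := hp.r_pos
  obtain ⟨t, ht0, htρ⟩ := ENNReal.lt_iff_exists_nnreal_btwn.mp hρ
  have ht0' : (0 : ℝ≥0) < t := by exact_mod_cast ht0
  have ht0r : (0 : ℝ) < (t : ℝ) := ht0'
  have ht_rad : (t : ℝ≥0∞) < p.radius := htρ.trans_le hp.r_le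
  obtain ⟨C, hC0, hC⟩ := p.norm_mul_pow_le_of_lt_radius ht_rad
  -- radius bound for rS p
  have hrad : ((t / 2 : ℝ≥0) : ℝ≥0∞) ≤ (rS p).radius := by
    refine (rS p).le_radius_of_bound (C / t) fun m => ?_
    have h2 : ((t / 2 : ℝ≥0) : ℝ) ^ m = (t : ℝ) ^ m / 2 ^ m := by
      push_cast
      rw [div_pow]
    have h1 : ‖rS p m‖ * ((t / 2 : ℝ≥0) : ℝ) ^ m ≤
        ((m + 1 : ℝ) / 2 ^ m) * (‖p (m + 1)‖ * (t : ℝ) ^ m) := by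
      rw [h2]
      calc ‖rS p m‖ * ((t : ℝ) ^ m / 2 ^ m)
          ≤ ((m + 1 : ℝ) * ‖p (m + 1)‖) * ((t : ℝ) ^ m / 2 ^ m) := by
            apply mul_le_mul_of_nonneg_right
            · exact_mod_cast norm_rS_le p m
            · positivity
        _ = ((m + 1 : ℝ) / 2 ^ m) * (‖p (m + 1)‖ * (t : ℝ) ^ m) := by ring
    have h3 : ((m + 1 : ℝ) / 2 ^ m) ≤ 1 := by
      rw [div_le_one (by positivity)]
      exact_mod_cast (Nat.lt_two_pow_self (n := m))
    have h4 : ‖p (m + 1)‖ * (t : ℝ) ^ m ≤ C / t := by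
      rw [le_div_iff₀ ht0r, mul_assoc, ← pow_succ]
      exact hC (m + 1)
    calc ‖rS p m‖ * ((t / 2 : ℝ≥0) : ℝ) ^ m
        ≤ ((m + 1 : ℝ) / 2 ^ m) * (‖p (m + 1)‖ * (t : ℝ) ^ m) := h1
      _ ≤ 1 * (‖p (m + 1)‖ * (t : ℝ) ^ m) := by
          apply mul_le_mul_of_nonneg_right h3
          positivity
      _ = ‖p (m + 1)‖ * (t : ℝ) ^ m := one_mul _
      _ ≤ C / t := h4
  set R : ℝ≥0∞ := ((t / 2 : ℝ≥0) : ℝ≥0∞) with hR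
  have hR0 : (0 : ℝ≥0∞) < R := by
    rw [hR]
    exact_mod_cast (by positivity : (0 : ℝ≥0) < t / 2)
  have hRρ : R ≤ ρ := by
    rw [hR]
    calc ((t / 2 : ℝ≥0) : ℝ≥0∞) ≤ ((t : ℝ≥0) : ℝ≥0∞) :=
          ENNReal.coe_le_coe.mpr (half_le_self zero_le)
      _ ≤ ρ := htρ.le
  set G : ℝ × ℝ → ℝ := fun Z => (rS p).sum (Z - c) with hG
  have hR_le : R ≤ (rS p).radius := by rw [hR]; exact hrad
  have hGball : HasFPowerSeriesOnBall G (rS p) c R :=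
    { r_le := hR_le
      r_pos := hR0
      hasSum := by
        intro y hy
        have hy' : y ∈ Metric.eball (0 : ℝ × ℝ) (rS p).radius :=
          Metric.eball_subset_eball hR_le hy
        have := (rS p).hasSum hy'
        simpa [hG, add_sub_cancel_left] using this }
  -- the division identity on the EMetric ball
  have hid : ∀ z ∈ Metric.eball (0 : ℝ × ℝ) R,
      z.1 * (rS p).sum z = f (c + z) - f (c + ((0 : ℝ), z.2)) := by
    intro z hz
    have hz_ρ : z ∈ Metric.eball (0 : ℝ × ℝ) ρ := Metric.eball_subset_eball hRρ hz
    have hw_ρ : ((0 : ℝ), z.2) ∈ Metric.eball (0 : ℝ × ℝ) ρ := by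
      rw [Metric.mem_eball] at hz_ρ ⊢
      refine lt_of_le_of_lt ?_ hz_ρ
      rw [Prod.edist_eq, Prod.edist_eq]
      simp only [Prod.fst_zero, Prod.snd_zero, edist_self]
      exact max_le zero_le (le_max_right _ _)
    have h1 := hp.hasSum hz_ρ
    have h2 := hp.hasSum hw_ρ
    have h3 := h1.sub h2
    have h0 : p 0 (fun _ => z) - p 0 (fun _ => ((0 : ℝ), z.2)) = 0 := by
      have : (fun _ : Fin 0 => z) = (fun _ : Fin 0 => ((0 : ℝ), z.2)) :=
        funext fun i => i.elim0
      rw [this, sub_self]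
    have h4 : HasSum (fun m => p (m + 1) (fun _ => z) - p (m + 1) (fun _ => ((0 : ℝ), z.2)))
        (f (c + z) - f (c + ((0 : ℝ), z.2))) := by
      have := (hasSum_nat_add_iff'
        (f := fun n => p n (fun _ => z) - p n (fun _ => ((0 : ℝ), z.2))) 1).mpr h3
      simpa [h0] using this
    have h5 : HasSum (fun m => z.1 * (rS p m) (fun _ => z))
        (f (c + z) - f (c + ((0 : ℝ), z.2))) := by
      have hfun : (fun m => z.1 * (rS p m) (fun _ => z)) =
          (fun m => p (m + 1) (fun _ => z) - p (m + 1) (fun _ => ((0 : ℝ), z.2))) :=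
        funext fun m => key p m z
      rw [hfun]
      exact h4
    have hzrad : z ∈ Metric.eball (0 : ℝ × ℝ) (rS p).radius :=
      Metric.eball_subset_eball hR_le hz
    have h6 : HasSum (fun m => z.1 * (rS p m) (fun _ => z)) (z.1 * (rS p).sum z) :=
      ((rS p).hasSum hzrad).mul_left z.1
    exact h6.unique h5
  refine ⟨G, ((t / 2 : ℝ≥0) : ℝ), by exact_mod_cast (by positivity : (0:ℝ≥0) < t / 2), ?_, ?_⟩
  · intro z hz
    refine hGball.analyticAt_of_mem ?_
    rw [hR, Metric.emetric_ball_nnreal]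
    exact hz
  · intro z hz
    have hz' : z - c ∈ Metric.eball (0 : ℝ × ℝ) R := by
      rw [hR, Metric.emetric_ball_nnreal, Metric.mem_ball, dist_zero_right]
      rw [Metric.mem_ball, dist_eq_norm] at hz
      exact hz
    have := hid (z - c) hz'
    simp only [Prod.fst_sub] at this
    have hcz : c + (z - c) = z := by abel
    have hcw : c + ((0 : ℝ), (z - c).2) = (c.1, z.2) := by
      ext <;> simp
    rw [hcz, hcw] at this
    exact this


/-- `Real.sin` is real-analytic. -/
lemma analyticAt_sin' (x : ℝ) : AnalyticAt ℝ Real.sin x := by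
  have h1 : AnalyticAt ℂ Complex.sin (x : ℂ) :=
    (Complex.analyticOnNhd_univ_iff_differentiable.mpr Complex.differentiable_sin) _
      (Set.mem_univ _)
  have h2 : AnalyticAt ℝ (fun y : ℝ => Complex.sin (Complex.ofRealCLM y)) x :=
    (h1.restrictScalars).comp (Complex.ofRealCLM.analyticAt x)
  have h3 : AnalyticAt ℝ (fun y : ℝ => Complex.reCLM (Complex.sin (Complex.ofRealCLM y))) x :=
    ((Complex.reCLM.analyticAt _).comp h2 :)
  refine h3.congr (Filter.Eventually.of_forall fun y => ?_)
  simp [Complex.sin_ofReal_re]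

lemma analyticAt_dslope_sin (a : ℝ) : AnalyticAt ℝ (dslope Real.sin a) a := by
  obtain ⟨q, hq⟩ := analyticAt_sin' a
  exact ⟨_, hq.has_fpower_series_dslope_fslope⟩

end OddFactorAux

open OddFactorAux in
/-- If `f : ℝ² → ℝ` is real-analytic and odd about every vertical line `x = kπ`
(`k ∈ ℤ`), then `f(x,y) = g(x,y)·sin x` for a real-analytic `g` which is even about
every line `x = kπ`. -/
theorem odd_analytic_factors_through_sin
    (f : ℝ × ℝ → ℝ)
    (hf : AnalyticOnNhd ℝ f Set.univ)
    (hodd : ∀ k : ℤ, ∀ x y : ℝ, f (2 * k * π - x, y) = -f (x, y)) :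
    ∃ g : ℝ × ℝ → ℝ,
      AnalyticOnNhd ℝ g Set.univ ∧
      (∀ x y : ℝ, f (x, y) = g (x, y) * Real.sin x) ∧
      (∀ k : ℤ, ∀ x y : ℝ, g (2 * k * π - x, y) = g (x, y)) := by
  classical
  have hzero : ∀ (n : ℤ) (y : ℝ), f ((n : ℝ) * π, y) = 0 := by
    intro n y
    have h := hodd n ((n : ℝ) * π) y
    have h2 : 2 * (n : ℝ) * π - (n : ℝ) * π = (n : ℝ) * π := by ring
    rw [h2] at h
    linarith
  set g : ℝ × ℝ → ℝ := fun z =>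
    if Real.sin z.1 = 0 then deriv (fun t => f (t, z.2)) z.1 / Real.cos z.1
    else f z / Real.sin z.1 with hgdef
  have hsin_fst : ∀ z₀ : ℝ × ℝ, AnalyticAt ℝ (fun z : ℝ × ℝ => Real.sin z.1) z₀ := by
    intro z₀
    have := (analyticAt_sin' z₀.1).comp ((ContinuousLinearMap.fst ℝ ℝ ℝ).analyticAt z₀)
    exact this.congr (Filter.Eventually.of_forall fun z => rfl)
  -- pointwise factorization
  have hfact : ∀ x y : ℝ, f (x, y) = g (x, y) * Real.sin x := by
    intro x y
    by_cases hs : Real.sin x = 0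
    · obtain ⟨n, hn⟩ := Real.sin_eq_zero_iff.mp hs
      rw [hs, mul_zero, ← hn]
      exact hzero n y
    · simp only [hgdef]
      rw [if_neg hs]
      field_simp
  -- evenness
  have heven : ∀ (k : ℤ) (x y : ℝ), g (2 * k * π - x, y) = g (x, y) := by
    intro k x y
    have h2k : (2 * (k : ℝ)) * π = ((2 * k : ℤ) : ℝ) * π := by push_cast; ring
    have h2k' : ((2 * k : ℤ) : ℝ) * π = (k : ℝ) * (2 * π) := by push_cast; ring
    have hsin2 : Real.sin (2 * (k : ℝ) * π - x) = -Real.sin x := by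
      rw [Real.sin_sub, h2k, Real.sin_int_mul_pi, h2k', Real.cos_int_mul_two_pi]
      ring
    have hcos2 : Real.cos (2 * (k : ℝ) * π - x) = Real.cos x := by
      rw [Real.cos_sub, h2k, Real.sin_int_mul_pi, h2k', Real.cos_int_mul_two_pi]
      ring
    by_cases hs : Real.sin x = 0
    · have hs' : Real.sin (2 * (k : ℝ) * π - x) = 0 := by rw [hsin2, hs, neg_zero]
      simp only [hgdef]
      rw [if_pos hs', if_pos hs, hcos2]
      congr 1
      set φ : ℝ → ℝ := fun t => f (t, y) with hφ
      have hφodd : (fun t => φ (2 * (k : ℝ) * π - t)) = fun t => -φ t :=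
        funext fun t => hodd k t y
      have h1 : deriv (fun t => φ (2 * (k : ℝ) * π - t)) x = -deriv φ (2 * (k : ℝ) * π - x) :=
        deriv_comp_const_sub φ (2 * (k : ℝ) * π) x
      rw [hφodd] at h1
      rw [deriv.fun_neg] at h1
      have := neg_injective h1
      exact this.symm
    · have hs' : Real.sin (2 * (k : ℝ) * π - x) ≠ 0 := by
        rw [hsin2]; exact neg_ne_zero.mpr hs
      simp only [hgdef]
      rw [if_neg hs', if_neg hs, hodd k x y, hsin2, neg_div_neg_eq]
  -- analyticity
  have han : AnalyticOnNhd ℝ g Set.univ := by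
    intro z₀ _
    by_cases hs : Real.sin z₀.1 = 0
    · obtain ⟨n, hn⟩ := Real.sin_eq_zero_iff.mp hs
      obtain ⟨G, ε₁, hε₁, hGan, hGeq⟩ := OddFactorAux.divide f z₀ (hf z₀ trivial)
      have hGf : ∀ w ∈ Metric.ball z₀ ε₁, f w = (w.1 - z₀.1) * G w := by
        intro w hw
        have := hGeq w hw
        have h0 : f (z₀.1, w.2) = 0 := by
          rw [← hn]; exact hzero n w.2
        rw [h0, sub_zero] at this
        exact this.symm
      set s : ℝ → ℝ := dslope Real.sin z₀.1 with hsdef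
      have hs_an : AnalyticAt ℝ s z₀.1 := analyticAt_dslope_sin z₀.1
      have hsa : s z₀.1 = Real.cos z₀.1 := by rw [hsdef, dslope_same, Real.deriv_sin]
      have hcos_ne : Real.cos z₀.1 ≠ 0 := by
        intro hc
        have h := Real.sin_sq_add_cos_sq z₀.1
        rw [hs, hc] at h
        norm_num at h
      have h_an : AnalyticAt ℝ (fun z : ℝ × ℝ => G z / s z.1) z₀ := by
        refine (hGan z₀ (Metric.mem_ball_self hε₁)).div ?_ (by rw [hsa]; exact hcos_ne)
        have := hs_an.comp ((ContinuousLinearMap.fst ℝ ℝ ℝ).analyticAt z₀)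
        exact this.congr (Filter.Eventually.of_forall fun z => rfl)
      refine h_an.congr ?_
      have hball : Metric.ball z₀ (min ε₁ π) ∈ 𝓝 z₀ :=
        Metric.ball_mem_nhds _ (lt_min hε₁ Real.pi_pos)
      filter_upwards [hball] with z hz
      have hz₁ : |z.1 - z₀.1| < min ε₁ π := by
        rw [Metric.mem_ball, Prod.dist_eq] at hz
        have h := lt_of_le_of_lt (le_max_left (dist z.1 z₀.1) (dist z.2 z₀.2)) hz
        rwa [Real.dist_eq] at h
      have hzball : z ∈ Metric.ball z₀ ε₁ := by
        rw [Metric.mem_ball] at hz ⊢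
        exact lt_of_lt_of_le hz (min_le_left _ _)
      by_cases hsz : Real.sin z.1 = 0
      · obtain ⟨n', hn'⟩ := Real.sin_eq_zero_iff.mp hsz
        have hz1 : z.1 = z₀.1 := by
          have hd : |((n' : ℝ) - n) * π| < π := by
            rw [sub_mul, hn', hn]
            exact lt_of_lt_of_le hz₁ (min_le_right _ _)
          have hd2 : |((n' : ℝ) - n)| * π < 1 * π := by
            rw [abs_mul, abs_of_pos Real.pi_pos] at hd
            rwa [one_mul]
          have hd3 : |((n' - n : ℤ) : ℝ)| < 1 := by
            push_cast
            exact lt_of_mul_lt_mul_right hd2 Real.pi_pos.le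
          have hd4 : |n' - n| < 1 := by exact_mod_cast hd3
          have : n' = n := by rw [abs_lt] at hd4; omega
          rw [← hn', ← hn, this]
        have hzeta : z = (z₀.1, z.2) := Prod.ext hz1 rfl
        have hmem : (z₀.1, z.2) ∈ Metric.ball z₀ ε₁ := by rw [← hzeta]; exact hzball
        have hderiv_eq : deriv (fun t => f (t, z.2)) z₀.1 = G (z₀.1, z.2) := by
          have hcont : ContinuousAt (fun t : ℝ => ((t, z.2) : ℝ × ℝ)) z₀.1 :=
            (continuous_id.prodMk continuous_const).continuousAt
          have hb : ∀ᶠ t in 𝓝 z₀.1, ((t, z.2) : ℝ × ℝ) ∈ Metric.ball z₀ ε₁ :=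
            hcont.preimage_mem_nhds (Metric.isOpen_ball.mem_nhds hmem)
          have hev : (fun t => f (t, z.2)) =ᶠ[𝓝 z₀.1]
              fun t => (t - z₀.1) * G (t, z.2) := by
            filter_upwards [hb] with t ht
            exact hGf _ ht
          have hGz : AnalyticAt ℝ G (z₀.1, z.2) := hGan _ hmem
          have hdG : DifferentiableAt ℝ (fun t : ℝ => G (t, z.2)) z₀.1 := by
            have := hGz.differentiableAt.comp z₀.1
              (((differentiableAt_id (𝕜 := ℝ) (x := z₀.1)).prodMk (differentiableAt_const z.2)))
            exact this
          have h1 : HasDerivAt (fun t : ℝ => t - z₀.1) 1 z₀.1 :=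
            (hasDerivAt_id _).sub_const _
          have hder : HasDerivAt (fun t => (t - z₀.1) * G (t, z.2)) (G (z₀.1, z.2)) z₀.1 := by
            have := h1.fun_mul hdG.hasDerivAt
            simpa using this
          rw [hev.deriv_eq, hder.deriv]
        simp only [hgdef]
        rw [if_pos hsz, hz1, hsa, hderiv_eq, ← hzeta]
      · have hz1ne : z.1 ≠ z₀.1 := fun hc => hsz (by rw [hc]; exact hs)
        have hfz : f z = (z.1 - z₀.1) * G z := hGf z hzball
        have hsz' : s z.1 = Real.sin z.1 / (z.1 - z₀.1) := by
          rw [hsdef, dslope_of_ne _ hz1ne, slope_def_field, hs, sub_zero]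
        simp only [hgdef]
        rw [if_neg hsz, hfz, hsz', div_div_eq_mul_div, mul_comm]
    · have hev : ∀ᶠ z in 𝓝 z₀, Real.sin z.1 ≠ 0 :=
        ((Real.continuous_sin.comp continuous_fst).continuousAt).eventually_ne hs
      have h_an : AnalyticAt ℝ (fun z : ℝ × ℝ => f z / Real.sin z.1) z₀ :=
        (hf z₀ trivial).div (hsin_fst z₀) hs
      refine h_an.congr ?_
      filter_upwards [hev] with z hz
      simp only [hgdef]
      rw [if_neg hz]
  exact ⟨g, han, hfact, heven⟩
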